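/- Let A be a commutative reduced ring with connected spectrum. A Laurent series f ∈ A((t)) is a unit if and only if its first nonzero coefficient is a unit of A. -/

import Mathlib

open HahnSeries

/-- Auxiliary: a map of Laurent series along a ring hom is multiplicative. -/
lemma aux_map_mul {A B : Type*} [CommRing A] [CommRing B] (π : A →+* B)
    (x y : LaurentSeries A) :
    (x * y).map π = (x.map π : LaurentSeries B) * (y.map π) :=
  HahnSeries.map_mul (π : A →ₙ+* B)

lemma aux_map_one {A B : Type*} [CommRing A] [CommRing B] (π : A →+* B) :
    ((1 : LaurentSeries A).map π : LaurentSeries B) = 1 :=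
  HahnSeries.map_one (π.toMonoidWithZeroHom)

/-- Forward direction: if `f` is a unit, its leading coefficient is a unit. -/
lemma aux_forward (A : Type*) [CommRing A] [IsReduced A]
    (hconn : ConnectedSpace (PrimeSpectrum A))
    (f : LaurentSeries A) (hf : f ≠ 0) (hu : IsUnit f) :
    IsUnit (f.coeff f.order) := by
  haveI := hconn
  obtain ⟨g, hfg⟩ := hu.exists_right_inv
  have hA : Nontrivial A := by
    by_contra h
    rw [not_nontrivial_iff_subsingleton] at h
    exact hf (Subsingleton.elim _ _)
  set n := f.order with hn
  set a := f.coeff n with ha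
  have ha0 : a ≠ 0 := (HahnSeries.coeff_order_eq_zero.not.mpr hf)
  -- For each prime `p`, facts about the reductions mod `p`.
  -- Define the basic open set U
  set U : Set (PrimeSpectrum A) := {p | a ∉ p.asIdeal} with hU
  have hUopen : IsOpen U := by
    have : U = ↑(PrimeSpectrum.basicOpen a) := by
      ext p; simp [hU, PrimeSpectrum.mem_basicOpen]
    rw [this]; exact (PrimeSpectrum.basicOpen a).isOpen
  -- key facts per prime
  have key : ∀ p : PrimeSpectrum A,
      (a ∉ p.asIdeal ↔ ∀ j : ℤ, j < -n → g.coeff j ∈ p.asIdeal) := by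
    intro p
    set π : A →+* A ⧸ p.asIdeal := Ideal.Quotient.mk p.asIdeal with hπ
    haveI : p.asIdeal.IsPrime := p.isPrime
    set F : LaurentSeries (A ⧸ p.asIdeal) := f.map π with hF
    set G : LaurentSeries (A ⧸ p.asIdeal) := g.map π with hG
    have hFG : F * G = 1 := by
      rw [hF, hG, ← aux_map_mul π f g, hfg, aux_map_one]
    have hF0 : F ≠ 0 := left_ne_zero_of_mul_eq_one hFG
    have hG0 : G ≠ 0 := right_ne_zero_of_mul_eq_one hFG
    have horder : F.order + G.order = 0 := by
      rw [← HahnSeries.order_mul hF0 hG0, hFG, HahnSeries.order_one]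
    have hFcoeff : ∀ k : ℤ, F.coeff k = π (f.coeff k) := fun k => rfl
    have hGcoeff : ∀ k : ℤ, G.coeff k = π (g.coeff k) := fun k => rfl
    have hFn : n ≤ F.order := by
      by_contra h
      push_neg at h
      have := (HahnSeries.coeff_order_eq_zero.not.mpr hF0)
      rw [hFcoeff, HahnSeries.coeff_eq_zero_of_lt_order h, map_zero] at this
      exact this rfl
    constructor
    · -- a ∉ p : all low coefficients of g are in p
      intro hap j hj
      by_contra hgj
      have hFord : F.order = n := by
        refine le_antisymm ?_ hFn
        apply HahnSeries.order_le_of_coeff_ne_zero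
        rw [hFcoeff]
        simpa [π, Ideal.Quotient.eq_zero_iff_mem] using hap
      have hGord : G.order ≤ j := by
        apply HahnSeries.order_le_of_coeff_ne_zero
        rw [hGcoeff]
        simpa [π, Ideal.Quotient.eq_zero_iff_mem] using hgj
      have : (0 : ℤ) < 0 := by
        calc (0 : ℤ) = F.order + G.order := horder.symm
        _ ≤ n + j := add_le_add hFord.le hGord
        _ < n + -n := by omega
        _ = 0 := by ring
      exact lt_irrefl _ this
    · -- conversely
      intro hlow
      intro hap
      have hFne : F.order ≠ n := by
        intro h
        have := (HahnSeries.coeff_order_eq_zero.not.mpr hF0)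
        rw [h, hFcoeff] at this
        exact this (by simpa [π, Ideal.Quotient.eq_zero_iff_mem] using hap)
      have hGlt : G.order < -n := by omega
      have := (HahnSeries.coeff_order_eq_zero.not.mpr hG0)
      rw [hGcoeff] at this
      exact this (by simpa [π, Ideal.Quotient.eq_zero_iff_mem] using hlow G.order hGlt)
  have hUcomp : Uᶜ = ⋃ j ∈ {j : ℤ | j < -n}, {p : PrimeSpectrum A | g.coeff j ∉ p.asIdeal} := by
    ext p
    simp only [Set.mem_compl_iff, hU, Set.mem_setOf_eq, not_not, Set.mem_iUnion]
    constructor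
    · intro hap
      by_contra h
      push_neg at h
      exact ((key p).mpr h) hap
    · rintro ⟨j, hj, hgj⟩
      by_contra hap
      exact hgj ((key p).mp hap j hj)
  have hUclopen : IsClopen U := by
    constructor
    · rw [← isOpen_compl_iff, hUcomp]
      apply isOpen_biUnion
      intro j _
      have : {p : PrimeSpectrum A | g.coeff j ∉ p.asIdeal} = ↑(PrimeSpectrum.basicOpen (g.coeff j)) := by
        ext p; simp [PrimeSpectrum.mem_basicOpen]
      rw [this]; exact (PrimeSpectrum.basicOpen _).isOpen
    · exact hUopen
  have hUne : U.Nonempty := by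
    by_contra h
    rw [Set.not_nonempty_iff_eq_empty] at h
    have : a ∈ nilradical A := by
      rw [nilradical_eq_sInf, Submodule.mem_sInf]
      intro I hI
      have : (⟨I, hI⟩ : PrimeSpectrum A) ∉ U := by rw [h]; exact Set.notMem_empty _
      simpa [hU] using this
    exact ha0 (by simpa [nilradical_eq_zero] using this)
  have hUuniv : U = Set.univ := by
    rcases isClopen_iff.mp hUclopen with h | h
    · exact absurd h hUne.ne_empty
    · exact h
  -- a is in no maximal ideal
  by_contra hna
  obtain ⟨M, hM, haM⟩ := exists_max_ideal_of_mem_nonunits (mem_nonunits_iff.mpr hna)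
  have : (⟨M, hM.isPrime⟩ : PrimeSpectrum A) ∈ U := hUuniv ▸ Set.mem_univ _
  exact this haM

/-- over a reduced commutative ring `A` with connected spectrum, a nonzero
Laurent series is a unit iff its first nonzero coefficient (the coefficient of its order)
is a unit of `A`. -/
theorem stmt_6 (A : Type*) [CommRing A] [IsReduced A]
    (hconn : ConnectedSpace (PrimeSpectrum A))
    (f : LaurentSeries A) (hf : f ≠ 0) :
    IsUnit f ↔ IsUnit (f.coeff f.order) := by
  constructor
  · exact aux_forward A hconn f hf
  · intro ha
    have h1 : IsUnit ((single f.order 1 : LaurentSeries A)) := by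
      refine IsUnit.of_mul_eq_one (single (-f.order) 1) ?_
      rw [HahnSeries.single_mul_single, add_neg_cancel, mul_one, HahnSeries.single_zero_one]
    have h2 : IsUnit (f.powerSeriesPart) := by
      rw [PowerSeries.isUnit_iff_constantCoeff]
      have : (PowerSeries.constantCoeff (R := A)) f.powerSeriesPart = f.coeff f.order := by
        have := LaurentSeries.powerSeriesPart_coeff f 0
        simpa only [Nat.cast_zero, add_zero, PowerSeries.coeff_zero_eq_constantCoeff] using this
      rw [this]; exact ha
    have h3 : IsUnit ((f.powerSeriesPart : LaurentSeries A)) :=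
      h2.map (HahnSeries.ofPowerSeries ℤ A)
    have := h1.mul h3
    rwa [LaurentSeries.single_order_mul_powerSeriesPart] at this
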